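/- (First bias term in E[σ̂²].) Let U₁,…,Uₙ be i.i.d. pairs Uᵢ = (Xᵢ,Yᵢ) with Xᵢ ~ P, Yᵢ ~ Q, and n ≥ 2. Then | (1/n³) Σ_{i,j,ℓ=1}^n E[H*ᵢℓ H*ⱼℓ] − E[H*₁₂ H*₁₃] | ≤ 18 ν² (3/n − 2/n²). -/

import Mathlib

open MeasureTheory ProbabilityTheory Filter Finset

/-- `Hstar k (x,y) (x',y') = k(x,x') - k(x,y') - k(y,x')`. -/
noncomputable def Hstar {𝒳 : Type*} (k : 𝒳 → 𝒳 → ℝ) (u v : 𝒳 × 𝒳) : ℝ :=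
  k u.1 v.1 - k u.1 v.2 - k u.2 v.1

section aux

variable {𝒳 : Type*} [MeasurableSpace 𝒳] {k : 𝒳 → 𝒳 → ℝ} {ν : ℝ}

lemma Hstar_symm (hsymm : ∀ x x', k x x' = k x' x) (u v : 𝒳 × 𝒳) :
    Hstar k u v = Hstar k v u := by
  simp only [Hstar]
  rw [hsymm u.1 v.1, hsymm u.1 v.2, hsymm u.2 v.1]
  ring

lemma Hstar_meas (hk : Measurable (Function.uncurry k)) :
    Measurable (fun p : (𝒳 × 𝒳) × (𝒳 × 𝒳) => Hstar k p.1 p.2) := by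
  have h1 : Measurable fun p : (𝒳 × 𝒳) × (𝒳 × 𝒳) => k p.1.1 p.2.1 :=
    hk.comp (measurable_fst.fst.prodMk measurable_snd.fst)
  have h2 : Measurable fun p : (𝒳 × 𝒳) × (𝒳 × 𝒳) => k p.1.1 p.2.2 :=
    hk.comp (measurable_fst.fst.prodMk measurable_snd.snd)
  have h3 : Measurable fun p : (𝒳 × 𝒳) × (𝒳 × 𝒳) => k p.1.2 p.2.1 :=
    hk.comp (measurable_fst.snd.prodMk measurable_snd.fst)
  exact (h1.sub h2).sub h3

lemma Hstar_bound (hbound : ∀ x x', |k x x'| ≤ ν) (u v : 𝒳 × 𝒳) :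
    |Hstar k u v| ≤ 3 * ν := by
  have h1 := abs_le.1 (hbound u.1 v.1)
  have h2 := abs_le.1 (hbound u.1 v.2)
  have h3 := abs_le.1 (hbound u.2 v.1)
  rw [abs_le]
  unfold Hstar
  constructor <;> linarith [h1.1, h1.2, h2.1, h2.2, h3.1, h3.2]

lemma Hstar_mul_bound (hbound : ∀ x x', |k x x'| ≤ ν) (u v u' v' : 𝒳 × 𝒳) :
    |Hstar k u v * Hstar k u' v'| ≤ 9 * ν ^ 2 := by
  have h1 := Hstar_bound hbound u v
  have h2 := Hstar_bound hbound u' v'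
  have h0 : (0 : ℝ) ≤ 3 * ν := (abs_nonneg _).trans h1
  rw [abs_mul]
  nlinarith [abs_nonneg (Hstar k u v), abs_nonneg (Hstar k u' v')]

lemma integrable_of_bdd {α : Type*} [MeasurableSpace α] (ρ : Measure α) [IsFiniteMeasure ρ]
    {f : α → ℝ} (hf : Measurable f) {C : ℝ} (hC : ∀ a, |f a| ≤ C) : Integrable f ρ :=
  Integrable.mono' (integrable_const C) hf.aestronglyMeasurable
    (ae_of_all _ fun a => by simpa [Real.norm_eq_abs] using hC a)

lemma abs_integral_le_of_bdd {α : Type*} [MeasurableSpace α] (ρ : Measure α)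
    [IsProbabilityMeasure ρ] (f : α → ℝ) {C : ℝ} (h : ∀ a, |f a| ≤ C) :
    |∫ a, f a ∂ρ| ≤ C := by
  have := norm_integral_le_of_norm_le_const (μ := ρ) (f := f) (C := C)
    (ae_of_all _ fun a => by simpa [Real.norm_eq_abs] using h a)
  simpa [Real.norm_eq_abs] using this

end aux

/-- First bias term in `E[σ̂²]`:
`|(1/n³) ∑_{i,j,ℓ} E[H*ᵢℓ H*ⱼℓ] − E[H*₁₂ H*₁₃]| ≤ 18ν² (3/n − 2/n²)`,
where `E[H*₁₂ H*₁₃]` is the expectation over three i.i.d. pairs with common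
law `m`, written as an iterated integral. -/
theorem first_bias_term {𝒳 Ω₀ : Type*} [MeasurableSpace 𝒳] [MeasurableSpace Ω₀]
    (μ : Measure Ω₀) [IsProbabilityMeasure μ]
    (P Q : Measure 𝒳) [IsProbabilityMeasure P] [IsProbabilityMeasure Q]
    (m : Measure (𝒳 × 𝒳)) [IsProbabilityMeasure m]
    (k : 𝒳 → 𝒳 → ℝ) (ν : ℝ)
    (hk : Measurable (Function.uncurry k))
    (hsymm : ∀ x x', k x x' = k x' x)
    (hbound : ∀ x x', |k x x'| ≤ ν)
    (n : ℕ) (hn : 2 ≤ n)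
    (U : Fin n → Ω₀ → 𝒳 × 𝒳)
    (hU : ∀ i, Measurable (U i))
    (hindep : iIndepFun U μ)
    (hlaw : ∀ i, Measure.map (U i) μ = m)
    (hmP : m.map Prod.fst = P) (hmQ : m.map Prod.snd = Q) :
    |(1 / (n : ℝ) ^ 3) *
        (∑ i : Fin n, ∑ j : Fin n, ∑ l : Fin n,
          ∫ ω, Hstar k (U i ω) (U l ω) * Hstar k (U j ω) (U l ω) ∂μ) -
        ∫ u, (∫ v, (∫ w, Hstar k u v * Hstar k u w ∂m) ∂m) ∂m| ≤
      18 * ν ^ 2 * (3 / (n : ℝ) - 2 / (n : ℝ) ^ 2) := by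
  classical
  have hHmeas := Hstar_meas (𝒳 := 𝒳) hk
  set F : ((𝒳 × 𝒳) × (𝒳 × 𝒳)) × (𝒳 × 𝒳) → ℝ :=
    fun z => Hstar k z.1.1 z.2 * Hstar k z.1.2 z.2 with hFdef
  set G : (𝒳 × 𝒳) × ((𝒳 × 𝒳) × (𝒳 × 𝒳)) → ℝ :=
    fun z => Hstar k z.1 z.2.1 * Hstar k z.1 z.2.2 with hGdef
  have hFmeas : Measurable F :=
    (hHmeas.comp (measurable_fst.fst.prodMk measurable_snd)).mul
      (hHmeas.comp (measurable_fst.snd.prodMk measurable_snd))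
  have hGmeas : Measurable G :=
    (hHmeas.comp (measurable_fst.prodMk measurable_snd.fst)).mul
      (hHmeas.comp (measurable_fst.prodMk measurable_snd.snd))
  have hFb : ∀ z, |F z| ≤ 9 * ν ^ 2 := fun z => Hstar_mul_bound hbound _ _ _ _
  have hGb : ∀ z, |G z| ≤ 9 * ν ^ 2 := fun z => Hstar_mul_bound hbound _ _ _ _
  set T : ℝ := ∫ u, (∫ v, (∫ w, Hstar k u v * Hstar k u w ∂m) ∂m) ∂m with hTdef
  set S : Fin n → Fin n → Fin n → ℝ := fun i j l =>
    ∫ ω, Hstar k (U i ω) (U l ω) * Hstar k (U j ω) (U l ω) ∂μ with hSdef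
  -- T as an integral over the triple product measure
  have hTprod : T = ∫ z, F z ∂((m.prod m).prod m) := by
    have hGint : Integrable G (m.prod (m.prod m)) := integrable_of_bdd _ hGmeas hGb
    have e1 : ∫ z, G z ∂(m.prod (m.prod m)) = ∫ u, ∫ q, G (u, q) ∂(m.prod m) ∂m :=
      integral_prod _ hGint
    have e2 : ∀ u : 𝒳 × 𝒳, ∫ q, G (u, q) ∂(m.prod m)
        = ∫ v, ∫ w, Hstar k u v * Hstar k u w ∂m ∂m := by
      intro u
      exact integral_prod _ (integrable_of_bdd _
        (hGmeas.comp (measurable_const.prodMk measurable_id))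
        (fun q => hGb (u, q)))
    have e3 : ∫ z, G z ∂(m.prod (m.prod m)) = ∫ z, F z ∂((m.prod m).prod m) := by
      rw [← Measure.prod_swap,
        integral_map measurable_swap.aemeasurable hGmeas.aestronglyMeasurable]
      refine integral_congr_ae (ae_of_all _ fun z => ?_)
      simp only [hGdef, hFdef, Prod.swap]
      rw [Hstar_symm hsymm z.2 z.1.1, Hstar_symm hsymm z.2 z.1.2]
    rw [hTdef, ← e3, e1]
    exact integral_congr_ae (ae_of_all _ fun u => (e2 u).symm)
  -- identical distribution of joint laws for distinct indices
  have hS_eq : ∀ i j l : Fin n, i ≠ j → i ≠ l → j ≠ l → S i j l = T := by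
    intro i j l hij hil hjl
    have hmapij : μ.map (fun ω => (U i ω, U j ω)) = m.prod m := by
      rw [(indepFun_iff_map_prod_eq_prod_map_map (hU i).aemeasurable
        (hU j).aemeasurable).mp (hindep.indepFun hij), hlaw, hlaw]
    have hmap3 : μ.map (fun ω => ((U i ω, U j ω), U l ω)) = (m.prod m).prod m := by
      have hIndep : IndepFun (fun ω => (U i ω, U j ω)) (U l) μ :=
        hindep.indepFun_prodMk hU i j l hil hjl
      rw [(indepFun_iff_map_prod_eq_prod_map_map
        ((hU i).prodMk (hU j)).aemeasurable (hU l).aemeasurable).mp hIndep,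
        hmapij, hlaw]
    have hmeas3 : Measurable (fun ω => ((U i ω, U j ω), U l ω)) :=
      ((hU i).prodMk (hU j)).prodMk (hU l)
    rw [hTprod, ← hmap3,
      integral_map hmeas3.aemeasurable hFmeas.aestronglyMeasurable]
  -- bounds
  have hSb : ∀ i j l : Fin n, |S i j l| ≤ 9 * ν ^ 2 := by
    intro i j l
    exact abs_integral_le_of_bdd μ _ (fun ω => Hstar_mul_bound hbound _ _ _ _)
  have hTb : |T| ≤ 9 * ν ^ 2 := by
    rw [hTprod]
    exact abs_integral_le_of_bdd _ _ hFb
  have hDb : ∀ i j l : Fin n, |S i j l - T| ≤ 18 * ν ^ 2 := by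
    intro i j l
    calc |S i j l - T| ≤ |S i j l| + |T| := abs_sub _ _
    _ ≤ 9 * ν ^ 2 + 9 * ν ^ 2 := add_le_add (hSb i j l) hTb
    _ = 18 * ν ^ 2 := by ring
  -- pointwise indicator bound
  set f : Fin n → Fin n → Fin n → ℝ := fun i j l =>
    18 * ν ^ 2 * ((if i = j then (1:ℝ) else 0) + (if j = l then (1:ℝ) else 0)
      + (if i = l then (1:ℝ) else 0) - 2 * (if i = j ∧ j = l then (1:ℝ) else 0)) with hfdef
  have hkey : ∀ i j l : Fin n, |S i j l - T| ≤ f i j l := by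
    intro i j l
    by_cases hij : i = j
    · by_cases hjl : j = l
      · have hil : i = l := hij.trans hjl
        simp only [hfdef, if_pos hij, if_pos hjl, if_pos hil, if_pos (And.intro hij hjl)]
        exact (hDb i j l).trans (le_of_eq (by ring))
      · have hil : ¬ i = l := fun h => hjl (hij.symm.trans h)
        simp only [hfdef, if_pos hij, if_neg hjl, if_neg hil,
          if_neg (fun h : i = j ∧ j = l => hjl h.2)]
        exact (hDb i j l).trans (le_of_eq (by ring))
    · by_cases hjl : j = l
      · have hil : ¬ i = l := fun h => hij (h.trans hjl.symm)
        simp only [hfdef, if_neg hij, if_pos hjl, if_neg hil,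
          if_neg (fun h : i = j ∧ j = l => hij h.1)]
        exact (hDb i j l).trans (le_of_eq (by ring))
      · by_cases hil : i = l
        · simp only [hfdef, if_neg hij, if_neg hjl, if_pos hil,
            if_neg (fun h : i = j ∧ j = l => hij h.1)]
          exact (hDb i j l).trans (le_of_eq (by ring))
        · rw [hS_eq i j l hij hil hjl]
          simp only [hfdef, if_neg hij, if_neg hjl, if_neg hil,
            if_neg (fun h : i = j ∧ j = l => hij h.1)]
          simp
  -- sum of the indicator bound
  have hsum_f : ∑ i : Fin n, ∑ j : Fin n, ∑ l : Fin n, f i j l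
      = 18 * ν ^ 2 * (3 * (n:ℝ) ^ 2 - 2 * n) := by
    have cA : ∑ i : Fin n, ∑ j : Fin n, ∑ l : Fin n, (if i = j then (1:ℝ) else 0)
        = (n:ℝ) ^ 2 := by
      simp [Finset.sum_const, Finset.sum_ite_eq, card_univ]
      ring
    have cB : ∑ i : Fin n, ∑ j : Fin n, ∑ l : Fin n, (if j = l then (1:ℝ) else 0)
        = (n:ℝ) ^ 2 := by
      simp [Finset.sum_ite_eq, card_univ]
      ring
    have cC : ∑ i : Fin n, ∑ j : Fin n, ∑ l : Fin n, (if i = l then (1:ℝ) else 0)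
        = (n:ℝ) ^ 2 := by
      simp [Finset.sum_ite_eq, card_univ]
      ring
    have cD : ∑ i : Fin n, ∑ j : Fin n, ∑ l : Fin n,
        (if i = j ∧ j = l then (1:ℝ) else 0) = (n:ℝ) := by
      simp [ite_and, Finset.sum_ite_eq, card_univ]
    have expand : ∀ i j l : Fin n, f i j l
        = 18 * ν ^ 2 * (if i = j then (1:ℝ) else 0)
          + 18 * ν ^ 2 * (if j = l then (1:ℝ) else 0)
          + 18 * ν ^ 2 * (if i = l then (1:ℝ) else 0)
          - 2 * (18 * ν ^ 2) * (if i = j ∧ j = l then (1:ℝ) else 0) := by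
      intro i j l
      simp only [hfdef]
      ring
    simp only [expand, Finset.sum_add_distrib, Finset.sum_sub_distrib, ← Finset.mul_sum]
    rw [cA, cB, cC, cD]
    ring
  have hsum_bound : |(∑ i : Fin n, ∑ j : Fin n, ∑ l : Fin n, S i j l)
      - (n:ℝ) ^ 3 * T| ≤ 18 * ν ^ 2 * (3 * (n:ℝ) ^ 2 - 2 * n) := by
    have h1 : (n:ℝ) ^ 3 * T = ∑ _i : Fin n, ∑ _j : Fin n, ∑ _l : Fin n, T := by
      simp [Finset.sum_const, card_univ]
      ring
    rw [h1, ← Finset.sum_sub_distrib]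
    simp only [← Finset.sum_sub_distrib]
    calc |∑ i : Fin n, ∑ j : Fin n, ∑ l : Fin n, (S i j l - T)|
        ≤ ∑ i : Fin n, ∑ j : Fin n, ∑ l : Fin n, |S i j l - T| := by
          refine (Finset.abs_sum_le_sum_abs _ _).trans (Finset.sum_le_sum fun i _ => ?_)
          refine (Finset.abs_sum_le_sum_abs _ _).trans (Finset.sum_le_sum fun j _ => ?_)
          exact Finset.abs_sum_le_sum_abs _ _
      _ ≤ ∑ i : Fin n, ∑ j : Fin n, ∑ l : Fin n, f i j l := by
          refine Finset.sum_le_sum fun i _ => Finset.sum_le_sum fun j _ =>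
            Finset.sum_le_sum fun l _ => hkey i j l
      _ = 18 * ν ^ 2 * (3 * (n:ℝ) ^ 2 - 2 * n) := hsum_f
  -- final arithmetic
  have hn0 : (0:ℝ) < n := by
    have : 0 < n := by omega
    exact_mod_cast this
  have hne : ((n:ℝ)) ≠ 0 := ne_of_gt hn0
  have e : (1 / (n:ℝ) ^ 3) * (∑ i : Fin n, ∑ j : Fin n, ∑ l : Fin n, S i j l) - T
      = (1 / (n:ℝ) ^ 3) * ((∑ i : Fin n, ∑ j : Fin n, ∑ l : Fin n, S i j l)
        - (n:ℝ) ^ 3 * T) := by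
    field_simp
  show |(1 / (n:ℝ) ^ 3) * (∑ i : Fin n, ∑ j : Fin n, ∑ l : Fin n, S i j l) - T|
      ≤ 18 * ν ^ 2 * (3 / (n:ℝ) - 2 / (n:ℝ) ^ 2)
  rw [e, abs_mul, abs_of_nonneg (by positivity : (0:ℝ) ≤ 1 / (n:ℝ) ^ 3)]
  calc (1 / (n:ℝ) ^ 3) * |(∑ i : Fin n, ∑ j : Fin n, ∑ l : Fin n, S i j l)
        - (n:ℝ) ^ 3 * T|
      ≤ (1 / (n:ℝ) ^ 3) * (18 * ν ^ 2 * (3 * (n:ℝ) ^ 2 - 2 * n)) :=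
        mul_le_mul_of_nonneg_left hsum_bound (by positivity)
    _ = 18 * ν ^ 2 * (3 / (n:ℝ) - 2 / (n:ℝ) ^ 2) := by
        field_simp
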